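/- Let d ≥ 2 be an integer, γ ∈ (0, 1), and c₁, c₂ > 0. Let p₁ : (0, ∞) → [0, ∞) be bounded with ∫₀^∞ p₁(u) du = 1, ∫₀^∞ u^{−(d−1)/2} p₁(u) du < ∞, and such that lim_{u→∞} p₁(u) u^{1+γ} exists and is finite; for t > 0 set p_t(u) = t^{−1/γ} p₁(t^{−1/γ} u). Then there exists a constant c₃ > 0, depending only on d, γ, c₁, c₂ and p₁, such that for every ρ > 0, every t > 0, and every measurable h : (0,∞) → [0,∞) satisfying h(u) ≤ c₁ u^{−(d−1)/2} exp(−c₂ ρ²/u) for all u > 0, one has ∫₀^∞ h(u) p_t(u) du ≤ c₃ · min( t^{−(d−1)/(2γ)}, t · ρ^{−(d−1)−2γ} ). -/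

import Mathlib

open MeasureTheory Filter

private lemma tail_bound (γ M L : ℝ) (hγ0 : 0 < γ) (p₁ : ℝ → ℝ)
    (hnonneg : ∀ u : ℝ, 0 < u → 0 ≤ p₁ u)
    (hM : ∀ u : ℝ, 0 < u → p₁ u ≤ M)
    (hlim : Tendsto (fun u : ℝ => p₁ u * u ^ (1 + γ)) atTop (nhds L)) :
    ∃ K : ℝ, 0 < K ∧ ∀ v : ℝ, 0 < v → p₁ v ≤ K * v ^ (-(1+γ)) := by
  have hM0 : 0 ≤ M := le_trans (hnonneg 1 one_pos) (hM 1 one_pos)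
  obtain ⟨V₀, hV₀⟩ := eventually_atTop.mp (hlim.eventually_lt_const (lt_add_one L))
  set V₁ : ℝ := max V₀ 1 with hV₁def
  have hV₁pos : (0:ℝ) < V₁ := lt_of_lt_of_le one_pos (le_max_right _ _)
  refine ⟨max (M * V₁ ^ (1+γ)) (|L| + 1), lt_of_lt_of_le (by positivity) (le_max_right _ _), ?_⟩
  intro v hv
  rcases le_or_gt V₁ v with hcase | hcase
  · have h1 : p₁ v * v ^ (1+γ) < L + 1 := hV₀ v (le_trans (le_max_left _ _) hcase)
    have h3 : (0:ℝ) < v ^ (1+γ) := Real.rpow_pos_of_pos hv _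
    have h2 : p₁ v ≤ (L+1) * v ^ (-(1+γ)) := by
      rw [Real.rpow_neg hv.le, ← div_eq_mul_inv, le_div_iff₀ h3]
      linarith
    refine h2.trans ?_
    have : (L+1) ≤ max (M * V₁ ^ (1+γ)) (|L| + 1) :=
      le_trans (by cases abs_cases L with
        | inl h => simp [h.1]
        | inr h => nlinarith [abs_nonneg L, le_abs_self L]) (le_max_right _ _)
    exact mul_le_mul_of_nonneg_right this (Real.rpow_nonneg hv.le _)
  · have h4 : V₁ ^ (-(1+γ)) ≤ v ^ (-(1+γ)) :=
      Real.rpow_le_rpow_of_nonpos hv hcase.le (by linarith)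
    calc p₁ v ≤ M := hM v hv
      _ = M * V₁^(1+γ) * V₁^(-(1+γ)) := by
          rw [mul_assoc, ← Real.rpow_add hV₁pos]
          rw [show 1 + γ + -(1+γ) = 0 by ring, Real.rpow_zero, mul_one]
      _ ≤ M * V₁^(1+γ) * v^(-(1+γ)) := by
          exact mul_le_mul_of_nonneg_left h4 (by positivity)
      _ ≤ _ := mul_le_mul_of_nonneg_right (le_max_left _ _) (Real.rpow_nonneg hv.le _)

/-- Subordinated heat-kernel bound: if `h(u) ≤ c₁ u^{-(d-1)/2} exp(-c₂ ρ²/u)` and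
`p_t(u) = t^{-1/γ} p₁(t^{-1/γ} u)` is the scaled density of a `γ`-stable subordinator
(with `p₁` bounded, of total mass one, with finite `(d-1)/2`-negative moment and
`p₁(u) u^{1+γ}` converging as `u → ∞`), then
`∫₀^∞ h(u) p_t(u) du ≤ c₃ · min(t^{-(d-1)/(2γ)}, t ρ^{-(d-1)-2γ})`. -/
theorem stmt8
    (d : ℕ) (hd : 2 ≤ d)
    (γ : ℝ) (hγ0 : 0 < γ) (hγ1 : γ < 1)
    (c₁ c₂ : ℝ) (hc₁ : 0 < c₁) (hc₂ : 0 < c₂)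
    (p₁ : ℝ → ℝ) (hp₁meas : Measurable p₁)
    (hnonneg : ∀ u : ℝ, 0 < u → 0 ≤ p₁ u)
    (hbdd : ∃ M : ℝ, ∀ u : ℝ, 0 < u → p₁ u ≤ M)
    (hprob : ∫ u in Set.Ioi (0 : ℝ), p₁ u = 1)
    (hmom : IntegrableOn (fun u : ℝ => u ^ (-((d : ℝ) - 1) / 2) * p₁ u) (Set.Ioi 0))
    (L : ℝ)
    (hlim : Tendsto (fun u : ℝ => p₁ u * u ^ (1 + γ)) atTop (nhds L)) :
    ∃ c₃ : ℝ, 0 < c₃ ∧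
      ∀ ρ t : ℝ, 0 < ρ → 0 < t →
      ∀ h : ℝ → ℝ, Measurable h → (∀ u : ℝ, 0 < u → 0 ≤ h u) →
        (∀ u : ℝ, 0 < u →
          h u ≤ c₁ * u ^ (-((d : ℝ) - 1) / 2) * Real.exp (-c₂ * ρ ^ 2 / u)) →
        ∫ u in Set.Ioi (0 : ℝ), h u * (t ^ (-(1 / γ)) * p₁ (t ^ (-(1 / γ)) * u))
          ≤ c₃ * min (t ^ (-((d : ℝ) - 1) / (2 * γ))) (t * ρ ^ (-((d : ℝ) - 1) - 2 * γ)) := by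
  obtain ⟨M, hM⟩ := hbdd
  obtain ⟨K, hKpos, hKbound⟩ := tail_bound γ M L hγ0 p₁ hnonneg hM hlim
  set e : ℝ := -((d : ℝ) - 1) / 2 with he
  have hd1 : (1:ℝ) ≤ (d:ℝ) - 1 := by
    have : (2:ℝ) ≤ (d:ℝ) := by exact_mod_cast hd
    linarith
  set s : ℝ := ((d:ℝ) - 1) / 2 + γ with hsdef
  have hs_pos : 0 < s := by rw [hsdef]; linarith
  set I : ℝ := ∫ v in Set.Ioi (0:ℝ), v ^ e * p₁ v with hIdef
  have hI0 : 0 ≤ I := by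
    rw [hIdef]
    refine setIntegral_nonneg measurableSet_Ioi fun v hv => ?_
    exact mul_nonneg (Real.rpow_nonneg (le_of_lt hv) _) (hnonneg v hv)
  set G : ℝ := (1/c₂) ^ s * Real.Gamma s with hGdef
  have hG0 : 0 < G := by
    rw [hGdef]
    exact mul_pos (Real.rpow_pos_of_pos (by positivity) _) (Real.Gamma_pos_of_pos hs_pos)
  refine ⟨max (c₁ * I + 1) (c₁ * K * G + 1),
    lt_of_lt_of_le (by positivity) (le_max_left _ _), ?_⟩
  intro ρ t hρ ht h hmeas hh0 hhb
  set s₀ : ℝ := t ^ (-(1 / γ)) with hs₀def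
  have hs₀ : 0 < s₀ := Real.rpow_pos_of_pos ht _
  set b : ℝ := c₂ * ρ ^ 2 with hbdef
  have hb : 0 < b := by positivity
  set f : ℝ → ℝ := fun u => h u * (s₀ * p₁ (s₀ * u)) with hfdef
  have hf0 : ∀ u ∈ Set.Ioi (0:ℝ), 0 ≤ f u := fun u hu =>
    mul_nonneg (hh0 u hu) (mul_nonneg hs₀.le (hnonneg _ (mul_pos hs₀ hu)))
  have hf0' : 0 ≤ᵐ[volume.restrict (Set.Ioi (0:ℝ))] f :=
    (ae_restrict_iff' measurableSet_Ioi).mpr (Filter.Eventually.of_forall hf0)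
  -- exponent identities
  have hexp1 : s₀ ^ (-e) = t ^ (-((d : ℝ) - 1) / (2 * γ)) := by
    rw [hs₀def, ← Real.rpow_mul ht.le,
      show -(1/γ) * (-e) = -((d:ℝ)-1)/(2*γ) by rw [he, neg_mul_neg, div_mul_div_comm, one_mul, mul_comm γ 2]]
  have hexp2 : s₀ ^ (-γ) = t := by
    rw [hs₀def, ← Real.rpow_mul ht.le,
      show -(1/γ) * (-γ) = 1 by have hγ : γ ≠ 0 := ne_of_gt hγ0; field_simp, Real.rpow_one]
  have hs₀e : s₀ ^ e ≠ 0 := (Real.rpow_pos_of_pos hs₀ e).ne'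
  -- ## Bound A
  set g : ℝ → ℝ := fun v => v ^ e * p₁ v with hg
  have hgscale : IntegrableOn (fun u => g (s₀ * u)) (Set.Ioi 0) := by
    rw [integrableOn_Ioi_comp_mul_left_iff g 0 hs₀, mul_zero]
    exact hmom
  have hfAint : IntegrableOn (fun u => (c₁ * s₀ ^ (1 - e)) * g (s₀ * u)) (Set.Ioi 0) :=
    hgscale.const_mul _
  have hfAle : f ≤ᵐ[volume.restrict (Set.Ioi (0:ℝ))]
      (fun u => (c₁ * s₀ ^ (1 - e)) * g (s₀ * u)) := by
    refine (ae_restrict_iff' measurableSet_Ioi).mpr (Filter.Eventually.of_forall ?_)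
    intro u hu
    have hu0 : (0:ℝ) < u := hu
    have hsu : 0 < s₀ * u := mul_pos hs₀ hu0
    have h1 : h u ≤ c₁ * u ^ e := by
      have hexp : Real.exp (-c₂ * ρ ^ 2 / u) ≤ 1 := by
        rw [Real.exp_le_one_iff]
        apply div_nonpos_of_nonpos_of_nonneg _ hu0.le
        nlinarith
      calc h u ≤ c₁ * u ^ e * Real.exp (-c₂ * ρ^2 / u) := hhb u hu0
        _ ≤ c₁ * u ^ e * 1 := mul_le_mul_of_nonneg_left hexp (by positivity)
        _ = c₁ * u ^ e := mul_one _
    have h2 : f u ≤ (c₁ * u ^ e) * (s₀ * p₁ (s₀ * u)) :=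
      mul_le_mul_of_nonneg_right h1 (mul_nonneg hs₀.le (hnonneg _ hsu))
    refine h2.trans (le_of_eq ?_)
    show (c₁ * u ^ e) * (s₀ * p₁ (s₀*u)) = (c₁ * s₀ ^ (1-e)) * ((s₀*u) ^ e * p₁ (s₀*u))
    rw [Real.mul_rpow hs₀.le hu0.le, Real.rpow_sub hs₀, Real.rpow_one]
    field_simp
  have hAval : ∫ u in Set.Ioi (0:ℝ), (c₁ * s₀ ^ (1 - e)) * g (s₀ * u)
      = (c₁ * I) * t ^ (-((d:ℝ)-1)/(2*γ)) := by
    rw [MeasureTheory.integral_const_mul]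
    rw [integral_comp_mul_left_Ioi g 0 hs₀, mul_zero]
    rw [smul_eq_mul, ← hIdef, ← hexp1]
    rw [Real.rpow_sub hs₀, Real.rpow_one, Real.rpow_neg hs₀.le]
    field_simp
  have hA : ∫ u in Set.Ioi (0:ℝ), f u ≤ (c₁ * I) * t ^ (-((d:ℝ)-1)/(2*γ)) := by
    rw [← hAval]
    exact integral_mono_of_nonneg hf0' hfAint hfAle
  -- ## Bound B
  set φ : ℝ → ℝ := fun y => y ^ (s - 1) * Real.exp (-(b * y)) with hφ
  have hφint : IntegrableOn φ (Set.Ioi 0) := by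
    have := integrableOn_rpow_mul_exp_neg_mul_rpow (s := s - 1) (p := 1) (b := b)
      (by linarith) one_pos hb
    simpa [Real.rpow_one, neg_mul] using this
  have hφval : ∫ y in Set.Ioi (0:ℝ), φ y = (1/b) ^ s * Real.Gamma s :=
    Real.integral_rpow_mul_exp_neg_mul_Ioi hs_pos hb
  have hEq : Set.EqOn (fun x : ℝ => x ^ ((-1:ℝ) - 1) • φ (x ^ (-1:ℝ)))
      (fun x : ℝ => x ^ (e - (1+γ)) * Real.exp (-(b * x⁻¹))) (Set.Ioi 0) := by
    intro x hx
    have hx0 : (0:ℝ) < x := hx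
    simp only [smul_eq_mul, hφ]
    rw [Real.rpow_neg_one x, Real.inv_rpow hx0.le, ← Real.rpow_neg hx0.le,
      ← mul_assoc, ← Real.rpow_add hx0]
    congr 2
    rw [he]; ring
  have hψint : IntegrableOn
      (fun x : ℝ => x ^ (e - (1+γ)) * Real.exp (-(b * x⁻¹))) (Set.Ioi 0) := by
    have h1 := (integrableOn_Ioi_comp_rpow_iff' φ (p := -1) (by norm_num)).mpr hφint
    exact h1.congr_fun hEq measurableSet_Ioi
  have hψval : ∫ x in Set.Ioi (0:ℝ), x ^ (e-(1+γ)) * Real.exp (-(b * x⁻¹))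
      = (1/b) ^ s * Real.Gamma s := by
    rw [← setIntegral_congr_fun measurableSet_Ioi hEq, ← hφval]
    have h2 := integral_comp_rpow_Ioi φ (p := -1) (by norm_num)
    simp only [abs_neg, abs_one, one_mul, smul_eq_mul] at h2 ⊢
    exact h2
  have hfBint : IntegrableOn (fun u => (c₁*K*t) * (u ^ (e-(1+γ)) * Real.exp (-(b*u⁻¹))))
      (Set.Ioi 0) := hψint.const_mul _
  have hfBle : f ≤ᵐ[volume.restrict (Set.Ioi (0:ℝ))]
      (fun u => (c₁*K*t) * (u ^ (e-(1+γ)) * Real.exp (-(b*u⁻¹)))) := by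
    refine (ae_restrict_iff' measurableSet_Ioi).mpr (Filter.Eventually.of_forall ?_)
    intro u hu
    have hu0 : (0:ℝ) < u := hu
    have hsu : 0 < s₀ * u := mul_pos hs₀ hu0
    have hp : p₁ (s₀*u) ≤ K * (s₀*u) ^ (-(1+γ)) := hKbound _ hsu
    have step : f u ≤ (c₁ * u ^ e * Real.exp (-c₂*ρ^2/u)) * (s₀ * (K * (s₀*u) ^ (-(1+γ)))) := by
      apply mul_le_mul (hhb u hu0) (mul_le_mul_of_nonneg_left hp hs₀.le)
        (mul_nonneg hs₀.le (hnonneg _ hsu)) (by positivity)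
    refine step.trans (le_of_eq ?_)
    have hexpeq : Real.exp (-c₂*ρ^2/u) = Real.exp (-(b*u⁻¹)) := by
      rw [hbdef]; congr 1; field_simp
    rw [hexpeq, Real.mul_rpow hs₀.le hu0.le]
    show (c₁ * u ^ e * Real.exp (-(b*u⁻¹))) * (s₀ * (K * (s₀ ^ (-(1+γ)) * u ^ (-(1+γ)))))
      = (c₁*K*t) * (u ^ (e-(1+γ)) * Real.exp (-(b*u⁻¹)))
    rw [show u ^ (e - (1+γ)) = u ^ e * u ^ (-(1+γ)) by
      rw [sub_eq_add_neg, Real.rpow_add hu0]]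
    rw [show s₀ * (K * (s₀ ^ (-(1+γ)) * u ^ (-(1+γ)))) = K * (s₀ ^ ((1:ℝ) + -(1+γ))) * u ^ (-(1+γ)) by
      rw [Real.rpow_add hs₀, Real.rpow_one]; ring]
    rw [show (1:ℝ) + -(1+γ) = -γ by ring, hexp2]
    ring
  have hρpow : (1/b) ^ s = (1/c₂) ^ s * ρ ^ (-((d:ℝ)-1) - 2*γ) := by
    rw [show (1/b) = (1/c₂) * (ρ^2)⁻¹ by rw [hbdef, one_div, mul_inv, one_div]]
    rw [Real.mul_rpow (by positivity) (by positivity),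
      Real.inv_rpow (by positivity), ← Real.rpow_neg (by positivity)]
    congr 1
    rw [← Real.rpow_natCast ρ 2, ← Real.rpow_mul hρ.le]
    congr 1
    rw [hsdef]; push_cast; ring
  have hB : ∫ u in Set.Ioi (0:ℝ), f u ≤ (c₁ * K * G) * (t * ρ ^ (-((d:ℝ)-1) - 2*γ)) := by
    have h3 := integral_mono_of_nonneg hf0' hfBint hfBle
    simp only [MeasureTheory.integral_const_mul] at h3
    rw [hψval, hρpow] at h3
    refine h3.trans (le_of_eq ?_)
    rw [hGdef]; ring
  -- ## combine
  have hXpos : (0:ℝ) < t ^ (-((d:ℝ)-1)/(2*γ)) := Real.rpow_pos_of_pos ht _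
  have hYpos : (0:ℝ) < t * ρ ^ (-((d:ℝ)-1) - 2*γ) :=
    mul_pos ht (Real.rpow_pos_of_pos hρ _)
  rcases min_cases (t ^ (-((d:ℝ)-1)/(2*γ))) (t * ρ ^ (-((d:ℝ)-1) - 2*γ)) with
    ⟨hmin, _⟩ | ⟨hmin, _⟩ <;> rw [hmin]
  · refine hA.trans ?_
    exact mul_le_mul_of_nonneg_right
      (le_trans (by linarith) (le_max_left (c₁*I+1) (c₁*K*G+1))) hXpos.le
  · refine hB.trans ?_
    exact mul_le_mul_of_nonneg_right
      (le_trans (by linarith) (le_max_right (c₁*I+1) (c₁*K*G+1))) hYpos.le
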